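/- Let ε ≤ 1/10, ρ ≥ 10ε, and define R₀ = 0, R_{i+1} = (2/ρ)(1/ε)^i + (5/ρ)R_i. For any i ≥ 1, 6·ε^i·Σ_{j=1}^{i} R_j·2^{i−j} ≤ 30ε/ρ. -/

import Mathlib

theorem stmt_13 (ρ ε : ℝ) (hρ : 0 < ρ) (hε : 0 < ε) (hε10 : ε ≤ 1 / 10)
    (hρε : ρ ≥ 10 * ε) (R : ℕ → ℝ)
    (hR0 : R 0 = 0)
    (hR : ∀ i : ℕ, R (i + 1) = (2 / ρ) * (1 / ε) ^ i + (5 / ρ) * R i) :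
    ∀ i : ℕ, 1 ≤ i →
      6 * ε ^ i * ∑ j ∈ Finset.Icc 1 i, R j * 2 ^ (i - j) ≤ 30 * ε / ρ := by
  have hεne : ε ≠ 0 := ne_of_gt hε
  have hRpos : ∀ j, 0 ≤ R j := by
    intro j
    induction j with
    | zero => rw [hR0]
    | succ n ih =>
      rw [hR]
      have h1 : (0:ℝ) ≤ (2 / ρ) * (1 / ε) ^ n := by positivity
      have h2 : (0:ℝ) ≤ (5 / ρ) * R n := mul_nonneg (by positivity) ih
      linarith
  have hRb : ∀ j, R (j + 1) ≤ 4 / ρ * (1 / ε) ^ j := by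
    intro j
    induction j with
    | zero =>
      rw [hR, hR0]
      simp only [pow_zero, mul_one, mul_zero, add_zero]
      rw [div_le_div_iff₀ hρ hρ]
      nlinarith
    | succ n ih =>
      rw [hR]
      have h5 : 5 / ρ ≤ 1 / (2 * ε) := by
        rw [div_le_div_iff₀ hρ (by positivity)]
        nlinarith
      have h1 : (5 / ρ) * R (n + 1) ≤ (1 / (2 * ε)) * (4 / ρ * (1 / ε) ^ n) :=
        calc (5 / ρ) * R (n + 1) ≤ (1 / (2 * ε)) * R (n + 1) :=
              mul_le_mul_of_nonneg_right h5 (hRpos _)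
          _ ≤ _ := mul_le_mul_of_nonneg_left ih (by positivity)
      have h2 : (1 / (2 * ε)) * (4 / ρ * (1 / ε) ^ n) = (2 / ρ) * (1 / ε) ^ (n + 1) := by
        field_simp
        linear_combination (-(4:ℝ) * (1 / ε) ^ n) * (by field_simp : ε * (1 / ε) = 1)
      rw [h2] at h1
      have h3 : (2 / ρ) * (1 / ε) ^ (n + 1) + (2 / ρ) * (1 / ε) ^ (n + 1)
          = 4 / ρ * (1 / ε) ^ (n + 1) := by ring
      linarith
  intro i hi
  have key : ∀ j ∈ Finset.Icc 1 i, R j * 2 ^ (i - j) ≤ 4 / ρ * (1 / ε) ^ (j - 1) * 2 ^ (i - j) := by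
    intro j hj
    simp only [Finset.mem_Icc] at hj
    have : R j ≤ 4 / ρ * (1 / ε) ^ (j - 1) := by
      obtain ⟨k, rfl⟩ := Nat.exists_eq_add_of_le hj.1
      simpa [Nat.add_sub_cancel_left, add_comm] using hRb k
    exact mul_le_mul_of_nonneg_right this (by positivity)
  have hsum := Finset.sum_le_sum key
  have heq : ε ^ i * ∑ j ∈ Finset.Icc 1 i, 4 / ρ * (1 / ε) ^ (j - 1) * 2 ^ (i - j)
      = 4 / ρ * ε * ∑ k ∈ Finset.range i, (2 * ε) ^ k := by
    rw [Finset.mul_sum, Finset.mul_sum]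
    rw [show Finset.Icc 1 i = Finset.Ico 1 (i + 1) from rfl]
    rw [Finset.sum_Ico_eq_sum_range]
    rw [← Finset.sum_range_reflect]
    have h1 : i + 1 - 1 = i := by omega
    rw [h1]
    apply Finset.sum_congr rfl
    intro k hk
    simp only [Finset.mem_range] at hk
    have h2 : 1 + (i - 1 - k) - 1 = i - 1 - k := by omega
    have h3 : i - (1 + (i - 1 - k)) = k := by omega
    rw [h2, h3]
    rw [show ε ^ i = ε ^ ((i - 1 - k) + k + 1) from by congr 1; omega]
    rw [pow_add, pow_add, mul_pow, one_div, inv_pow]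
    field_simp
  have hgeom : ∑ k ∈ Finset.range i, (2 * ε) ^ k ≤ 5 / 4 := by
    have hx1 : 2 * ε < 1 := by linarith
    have hx0 : (0:ℝ) ≤ 2 * ε := by linarith
    rw [geom_sum_eq hx1.ne i, div_le_iff_of_neg (by linarith)]
    nlinarith [pow_nonneg hx0 i]
  have hG0 : (0:ℝ) ≤ ∑ k ∈ Finset.range i, (2 * ε) ^ k :=
    Finset.sum_nonneg fun k _ => pow_nonneg (by linarith) k
  calc 6 * ε ^ i * ∑ j ∈ Finset.Icc 1 i, R j * 2 ^ (i - j)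
      = 6 * (ε ^ i * ∑ j ∈ Finset.Icc 1 i, R j * 2 ^ (i - j)) := by ring
    _ ≤ 6 * (ε ^ i * ∑ j ∈ Finset.Icc 1 i, 4 / ρ * (1 / ε) ^ (j - 1) * 2 ^ (i - j)) := by
        have := mul_le_mul_of_nonneg_left hsum (show (0:ℝ) ≤ ε ^ i by positivity)
        linarith
    _ = 6 * (4 / ρ * ε * ∑ k ∈ Finset.range i, (2 * ε) ^ k) := by rw [heq]
    _ ≤ 6 * (4 / ρ * ε * (5 / 4)) := by
        have h0 : (0:ℝ) ≤ 4 / ρ * ε := by positivity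
        nlinarith [mul_le_mul_of_nonneg_left hgeom h0]
    _ = 30 * ε / ρ := by field_simp; ring
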